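/- If ξ ⊆ [n]_1 is a well-formed subset moving i to j with i ≠ j (where i, j ∈ {0,...,n}), then i occurs exactly once in ξ, as an odd face; j occurs exactly once, as an even face; and every other value of {0,...,n} occurring in ξ occurs exactly twice, once as an even and once as an odd face. Consequently ξ determines a strictly increasing chain i = k_0 < k_1 < ... < k_r = j with ξ = {(k_0 k_1),...,(k_{r-1} k_r)}. -/

import Mathlib

/-- The even faces of a set of edges: the set of second entries. -/
def ePos {n : ℕ} (ξ : Set (Fin (n+1) × Fin (n+1))) : Set (Fin (n+1)) := Prod.snd '' ξ

/-- The odd faces of a set of edges: the set of first entries. -/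
def eNeg {n : ℕ} (ξ : Set (Fin (n+1) × Fin (n+1))) : Set (Fin (n+1)) := Prod.fst '' ξ

/-- Well-formedness: distinct edges share no even face and no odd face. -/
def EWf {n : ℕ} (ξ : Set (Fin (n+1) × Fin (n+1))) : Prop :=
  ∀ p ∈ ξ, ∀ q ∈ ξ, p ≠ q → p.2 ≠ q.2 ∧ p.1 ≠ q.1

/-- `ξ` moves `i` to `j`. -/
def EMoves {n : ℕ} (ξ : Set (Fin (n+1) × Fin (n+1))) (i j : Fin (n+1)) : Prop :=
  ({j} : Set (Fin (n+1))) = ({i} ∪ ePos ξ) \ eNeg ξ ∧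
  ({i} : Set (Fin (n+1))) = ({j} ∪ eNeg ξ) \ ePos ξ

/-- `ξ` is a 1-cell `i → j` of the oriental `𝒪(n)`. -/
def IsOneCell {n : ℕ} (ξ : Set (Fin (n+1) × Fin (n+1))) (i j : Fin (n+1)) : Prop :=
  (∀ p ∈ ξ, p.1 < p.2) ∧ EWf ξ ∧ EMoves ξ i j


namespace OA
variable {n : ℕ}

lemma mem_ePos {ξ : Set (Fin (n+1) × Fin (n+1))} {v : Fin (n+1)} :
    v ∈ ePos ξ ↔ ∃ p ∈ ξ, p.2 = v := Set.mem_image _ _ _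

lemma mem_eNeg {ξ : Set (Fin (n+1) × Fin (n+1))} {v : Fin (n+1)} :
    v ∈ eNeg ξ ↔ ∃ p ∈ ξ, p.1 = v := Set.mem_image _ _ _

lemma moves_facts {ξ : Set (Fin (n+1) × Fin (n+1))} {i j : Fin (n+1)}
    (hij : i ≠ j) (hmv : EMoves ξ i j) :
    i ∈ eNeg ξ ∧ i ∉ ePos ξ ∧ j ∈ ePos ξ ∧ j ∉ eNeg ξ := by
  obtain ⟨h1, h2⟩ := hmv
  have hj : j ∈ ({i} ∪ ePos ξ) \ eNeg ξ := by rw [← h1]; rfl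
  have hi : i ∈ ({j} ∪ eNeg ξ) \ ePos ξ := by rw [← h2]; rfl
  refine ⟨?_, hi.2, ?_, hj.2⟩
  · rcases hi.1 with h | h
    · exact absurd h hij
    · exact h
  · rcases hj.1 with h | h
    · exact absurd h.symm hij
    · exact h

lemma moves_mid {ξ : Set (Fin (n+1) × Fin (n+1))} {i j v : Fin (n+1)}
    (hmv : EMoves ξ i j) (hvi : v ≠ i) (hvj : v ≠ j)
    (hv : v ∈ eNeg ξ ∪ ePos ξ) : v ∈ eNeg ξ ∧ v ∈ ePos ξ := by
  obtain ⟨h1, h2⟩ := hmv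
  have H1 := Set.ext_iff.mp h1 v
  have H2 := Set.ext_iff.mp h2 v
  simp only [Set.mem_singleton_iff, Set.mem_diff, Set.mem_union] at H1 H2
  rcases hv with h | h
  · refine ⟨h, ?_⟩
    by_contra hp
    exact hvi (H2.mpr ⟨Or.inr h, hp⟩)
  · refine ⟨?_, h⟩
    by_contra hn
    exact hvj (H1.mpr ⟨Or.inr h, hn⟩)

lemma eq_empty_of_moves_self {ξ : Set (Fin (n+1) × Fin (n+1))} {j : Fin (n+1)}
    (hsub : ∀ p ∈ ξ, p.1 < p.2) (hmv : EMoves ξ j j) : ξ = ∅ := by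
  by_contra hne
  rw [← Ne, ← Set.nonempty_iff_ne_empty] at hne
  obtain ⟨a, ha, hmin⟩ := Set.exists_min_image ξ Prod.fst (Set.toFinite ξ) hne
  have hPos : a.1 ∉ ePos ξ := by
    rintro ⟨p, hp, hp2⟩
    exact absurd (lt_of_lt_of_le (hp2 ▸ hsub p hp) (hmin p hp)) (lt_irrefl _)
  have hNeg : a.1 ∈ eNeg ξ := ⟨a, ha, rfl⟩
  have hmem : a.1 ∈ ({j} ∪ eNeg ξ) \ ePos ξ := ⟨Or.inr hNeg, hPos⟩
  rw [← hmv.2] at hmem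
  have hj : j ∉ eNeg ξ := by
    have : j ∈ ({j} ∪ ePos ξ) \ eNeg ξ := by rw [← hmv.1]; rfl
    exact this.2
  exact hj (hmem ▸ hNeg)


lemma moves_tail {ξ : Set (Fin (n+1) × Fin (n+1))} {i j : Fin (n+1)}
    (hij : i ≠ j) (hwf : EWf ξ) (hmv : EMoves ξ i j)
    {e : Fin (n+1) × Fin (n+1)} (he : e ∈ ξ) (he1 : e.1 = i) (hie : i ≠ e.2) :
    EMoves (ξ \ {e}) e.2 j := by
  obtain ⟨hiNeg, hiPos, hjPos, hjNeg⟩ := moves_facts hij hmv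
  set ξ' := ξ \ {e} with hξ'
  set b := e.2 with hb
  have hPosSplit : ∀ v, v ∈ ePos ξ ↔ v ∈ ePos ξ' ∨ v = b := by
    intro v
    constructor
    · rintro ⟨p, hp, rfl⟩
      by_cases hpe : p = e
      · exact Or.inr (by rw [hpe])
      · exact Or.inl ⟨p, ⟨hp, hpe⟩, rfl⟩
    · rintro (⟨p, hp, rfl⟩ | rfl)
      · exact ⟨p, hp.1, rfl⟩
      · exact ⟨e, he, rfl⟩
  have hNegSplit : ∀ v, v ∈ eNeg ξ ↔ v ∈ eNeg ξ' ∨ v = i := by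
    intro v
    constructor
    · rintro ⟨p, hp, rfl⟩
      by_cases hpe : p = e
      · exact Or.inr (by rw [hpe, he1])
      · exact Or.inl ⟨p, ⟨hp, hpe⟩, rfl⟩
    · rintro (⟨p, hp, rfl⟩ | rfl)
      · exact ⟨p, hp.1, rfl⟩
      · exact ⟨e, he, he1⟩
  have hbPos' : b ∉ ePos ξ' := by
    rintro ⟨p, hp, hp2⟩
    exact (hwf p hp.1 e he (by exact hp.2)).1 hp2
  have hiNeg' : i ∉ eNeg ξ' := by
    rintro ⟨p, hp, hp1⟩
    exact (hwf p hp.1 e he (by exact hp.2)).2 (hp1.trans he1.symm)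
  have hbPos : b ∈ ePos ξ := ⟨e, he, rfl⟩
  have H1 := Set.ext_iff.mp hmv.1
  have H2 := Set.ext_iff.mp hmv.2
  simp only [Set.mem_singleton_iff, Set.mem_diff, Set.mem_union] at H1 H2
  constructor
  · ext v
    simp only [Set.mem_singleton_iff, Set.mem_diff, Set.mem_union]
    constructor
    · rintro rfl
      refine ⟨?_, fun h => hjNeg ((hNegSplit v).mpr (Or.inl h))⟩
      rcases (hPosSplit v).mp hjPos with h | h
      · exact Or.inr h
      · exact Or.inl h
    · rintro ⟨hv1, hv2⟩
      apply (H1 v).mpr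
      have hvPos : v ∈ ePos ξ := by
        rcases hv1 with rfl | h
        · exact hbPos
        · exact (hPosSplit v).mpr (Or.inl h)
      refine ⟨Or.inr hvPos, fun h => ?_⟩
      rcases (hNegSplit v).mp h with h' | rfl
      · exact hv2 h'
      · exact hiPos hvPos
  · ext v
    simp only [Set.mem_singleton_iff, Set.mem_diff, Set.mem_union]
    constructor
    · rintro rfl
      refine ⟨?_, hbPos'⟩
      by_cases hbN : b ∈ eNeg ξ
      · rcases (hNegSplit b).mp hbN with h | h
        · exact Or.inr h
        · exact absurd h.symm hie
      · exact Or.inl ((H1 b).mpr ⟨Or.inr hbPos, hbN⟩)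
    · rintro ⟨hv1, hv2⟩
      by_contra hvb
      have hvPos : v ∉ ePos ξ := fun h => by
        rcases (hPosSplit v).mp h with h' | rfl
        · exact hv2 h'
        · exact hvb rfl
      rcases hv1 with rfl | h
      · exact hvPos hjPos
      · exact hiNeg' (((H2 v).mpr ⟨Or.inr ((hNegSplit v).mpr (Or.inl h)), hvPos⟩) ▸ h)

lemma chain_of_moves (N : ℕ) (ξ : Set (Fin (n+1) × Fin (n+1))) (i j : Fin (n+1))
    (hcard : ξ.ncard ≤ N) (hsub : ∀ p ∈ ξ, p.1 < p.2) (hwf : EWf ξ)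
    (hmv : EMoves ξ i j) (hij : i ≠ j) :
    ∃ (r : ℕ) (k : Fin (r+2) → Fin (n+1)), StrictMono k ∧ k 0 = i ∧
      k (Fin.last (r+1)) = j ∧
      ξ = ⋃ t : Fin (r+1), {(k t.castSucc, k t.succ)} := by
  induction N generalizing ξ i with
  | zero =>
    exfalso
    have hempty : ξ = ∅ := by
      rw [← Set.ncard_eq_zero (Set.toFinite ξ)]; omega
    subst hempty
    obtain ⟨h1, _⟩ := hmv
    simp only [ePos, eNeg, Set.image_empty, Set.union_empty, Set.diff_empty] at h1
    exact hij (Set.singleton_eq_singleton_iff.mp h1).symm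
  | succ N IH =>
    obtain ⟨hiNeg, hiPos, hjPos, hjNeg⟩ := moves_facts hij hmv
    obtain ⟨e, he, he1⟩ := hiNeg
    have hib : i < e.2 := he1 ▸ hsub e he
    have hmv' : EMoves (ξ \ {e}) e.2 j := moves_tail hij hwf hmv he he1 hib.ne
    have hξeq : ξ = insert e (ξ \ {e}) := by
      rw [Set.insert_diff_singleton, Set.insert_eq_of_mem he]
    by_cases hbj : e.2 = j
    · -- tail is empty, ξ = {e} = {(i,j)}
      have htail : ξ \ {e} = ∅ := eq_empty_of_moves_self
        (fun p hp => hsub p hp.1) (hbj ▸ hmv')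
      have hξ : ξ = {e} := by rw [hξeq, htail]; simp
      have heij : e = (i, j) := Prod.ext he1 hbj
      have hijlt : i < j := hbj ▸ hib
      refine ⟨0, ![i, j], ?_, rfl, rfl, ?_⟩
      · rw [Fin.strictMono_iff_lt_succ]
        intro t
        fin_cases t
        exact hijlt
      · rw [hξ, heij]
        ext p
        simp only [Set.mem_singleton_iff, Set.mem_iUnion]
        constructor
        · rintro rfl
          exact ⟨0, by simp⟩
        · rintro ⟨t, rfl⟩
          fin_cases t
          simp
    · obtain ⟨r, k, hmono, hk0, hklast, hkξ⟩ := IH (ξ \ {e}) e.2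
        (by
          have := Set.ncard_diff_singleton_lt_of_mem he (Set.toFinite ξ)
          omega)
        (fun p hp => hsub p hp.1)
        (fun p hp q hq hpq => hwf p hp.1 q hq.1 hpq)
        hmv' hbj
      have hsc : ∀ (s : Fin (r+1)), ((s.succ).castSucc : Fin (r+3)) = (s.castSucc).succ :=
        fun s => (Fin.succ_castSucc s).symm
      refine ⟨r + 1, Fin.cases i k, ?_, by simp only [Fin.cases_zero], ?_, ?_⟩
      · rw [Fin.strictMono_iff_lt_succ]
        intro t
        induction t using Fin.cases with
        | zero =>
          rw [Fin.castSucc_zero, Fin.cases_zero, Fin.cases_succ, hk0]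
          exact hib
        | succ s =>
          rw [hsc s, Fin.cases_succ, Fin.cases_succ]
          exact hmono (Fin.castSucc_lt_succ (i := s))
      · rw [← Fin.succ_last]
        simp only [Fin.cases_succ]
        exact hklast
      · rw [hξeq, hkξ]
        ext p
        simp only [Set.mem_insert_iff, Set.mem_iUnion, Set.mem_singleton_iff]
        constructor
        · rintro (hpe | ⟨t, rfl⟩)
          · subst hpe
            refine ⟨0, ?_⟩
            rw [Fin.castSucc_zero, Fin.cases_zero, Fin.cases_succ, hk0]
            rw [← he1]
          · refine ⟨t.succ, ?_⟩
            rw [hsc t, Fin.cases_succ, Fin.cases_succ]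
        · rintro ⟨t, rfl⟩
          induction t using Fin.cases with
          | zero =>
            left
            rw [Fin.castSucc_zero, Fin.cases_zero, Fin.cases_succ, hk0]
            rw [← he1]
          | succ s =>
            right
            exact ⟨s, by rw [hsc s, Fin.cases_succ, Fin.cases_succ]⟩

end OA

/-- For a 1-cell `ξ : i → j` with `i ≠ j`: `i` occurs exactly once in `ξ`,
as an odd face (first entry); `j` occurs exactly once, as an even face
(second entry); every other occurring value occurs exactly once as a first
entry and exactly once as a second entry; consequently `ξ` is a strictly
increasing chain from `i` to `j`. -/
theorem oriental_one_cell_occurrences (n : ℕ) (i j : Fin (n+1)) (hij : i ≠ j)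
    (ξ : Set (Fin (n+1) × Fin (n+1))) (hsub : ∀ p ∈ ξ, p.1 < p.2)
    (hwf : EWf ξ) (hmv : EMoves ξ i j) :
    (∃! p, p ∈ ξ ∧ p.1 = i) ∧ (∀ p ∈ ξ, p.2 ≠ i) ∧
    (∃! p, p ∈ ξ ∧ p.2 = j) ∧ (∀ p ∈ ξ, p.1 ≠ j) ∧
    (∀ v : Fin (n+1), v ≠ i → v ≠ j → v ∈ eNeg ξ ∪ ePos ξ →
      (∃! p, p ∈ ξ ∧ p.1 = v) ∧ (∃! p, p ∈ ξ ∧ p.2 = v)) ∧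
    (∃ (r : ℕ) (k : Fin (r+2) → Fin (n+1)), StrictMono k ∧
      k 0 = i ∧ k (Fin.last (r+1)) = j ∧
      ξ = ⋃ t : Fin (r+1), {(k t.castSucc, k t.succ)}) := by
  obtain ⟨hiNeg, hiPos, hjPos, hjNeg⟩ := OA.moves_facts hij hmv
  refine ⟨?_, ?_, ?_, ?_, ?_, ?_⟩
  · obtain ⟨e, he, he1⟩ := hiNeg
    refine ⟨e, ⟨he, he1⟩, ?_⟩
    rintro q ⟨hq, hq1⟩
    by_contra hne
    exact (hwf q hq e he hne).2 (hq1.trans he1.symm)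
  · intro p hp hp2
    exact hiPos ⟨p, hp, hp2⟩
  · obtain ⟨e, he, he2⟩ := hjPos
    refine ⟨e, ⟨he, he2⟩, ?_⟩
    rintro q ⟨hq, hq2⟩
    by_contra hne
    exact (hwf q hq e he hne).1 (hq2.trans he2.symm)
  · intro p hp hp1
    exact hjNeg ⟨p, hp, hp1⟩
  · intro v hvi hvj hv
    obtain ⟨hvNeg, hvPos⟩ := OA.moves_mid hmv hvi hvj hv
    constructor
    · obtain ⟨e, he, he1⟩ := hvNeg
      refine ⟨e, ⟨he, he1⟩, ?_⟩
      rintro q ⟨hq, hq1⟩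
      by_contra hne
      exact (hwf q hq e he hne).2 (hq1.trans he1.symm)
    · obtain ⟨e, he, he2⟩ := hvPos
      refine ⟨e, ⟨he, he2⟩, ?_⟩
      rintro q ⟨hq, hq2⟩
      by_contra hne
      exact (hwf q hq e he hne).1 (hq2.trans he2.symm)
  · exact OA.chain_of_moves ξ.ncard ξ i j le_rfl hsub hwf hmv hij
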